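/- Let Λ be a nonempty set, let c, β, B be real numbers with 0 < c ≤ 1, β > 0 and B ≥ 0, let π⁽¹⁾,…,π⁽ᴹ⁾: Λ → ℝ satisfy c ≤ π⁽ᵐ⁾(λ) ≤ 1 for all m and λ, with iteration indices t⁽¹⁾ < … < t⁽ᴹ⁾ ∈ ℕ, and let α: Λ × ℕ → ℝ satisfy |α(λ,t)| ≤ B for all λ ∈ Λ and t ∈ ℕ. Define the prior-adjusted acquisition α_dyna(λ,t) := α(λ,t) · ∏_{m=1}^{M} π⁽ᵐ⁾(λ)^(β/(t - t⁽ᵐ⁾)) for t > t⁽ᴹ⁾. Then sup_{λ∈Λ} |α_dyna(λ,t) - α(λ,t)| → 0 as t → ∞; that is, the dynamically adapted acquisition function converges uniformly to the unadjusted acquisition function. -/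

import Mathlib

/-- The dynamically adapted acquisition function
`α_dyna(λ, t) = α(λ, t) · ∏ₘ π⁽ᵐ⁾(λ) ^ (β / (t - t⁽ᵐ⁾))`, built from a uniformly
bounded base acquisition function `α` and finitely many priors with values in
`[c, 1]` provided at iterations `t⁽¹⁾ < … < t⁽ᴹ⁾`, converges uniformly to the
unadjusted acquisition function `α` as `t → ∞`. -/
theorem dyna_acquisition_uniformly_tendsto_base
    {Λ : Type*} [Nonempty Λ] (c β B : ℝ) (hc : 0 < c) (hc1 : c ≤ 1)
    (hβ : 0 < β) (hB : 0 ≤ B)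
    (M : ℕ) (π : Fin M → Λ → ℝ)
    (hπ_lb : ∀ m l, c ≤ π m l) (hπ_ub : ∀ m l, π m l ≤ 1)
    (tm : Fin M → ℕ) (htm : StrictMono tm)
    (α : Λ → ℕ → ℝ) (hα : ∀ l t, |α l t| ≤ B)
    (αdyna : Λ → ℕ → ℝ)
    (hdyna : ∀ l t, αdyna l t =
      α l t * ∏ m : Fin M, π m l ^ (β / ((t : ℝ) - (tm m : ℝ)))) :
    Filter.Tendsto (fun t : ℕ => ⨆ l : Λ, |αdyna l t - α l t|)
      Filter.atTop (nhds 0) := by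
  set S : ℕ → ℝ := fun t => ∑ m : Fin M, β / ((t : ℝ) - (tm m : ℝ)) with hS
  -- S tends to 0
  have hS0 : Filter.Tendsto S Filter.atTop (nhds 0) := by
    have : Filter.Tendsto S Filter.atTop (nhds (∑ _m : Fin M, (0 : ℝ))) := by
      apply tendsto_finset_sum
      intro m _
      have h1 : Filter.Tendsto (fun t : ℕ => (t : ℝ) - (tm m : ℝ))
          Filter.atTop Filter.atTop :=
        Filter.tendsto_atTop_add_const_right _ _ tendsto_natCast_atTop_atTop
      have h2 := h1.inv_tendsto_atTop
      have := h2.const_mul β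
      simpa [div_eq_mul_inv] using this
    simpa using this
  -- the dominating function tends to 0
  have hg : Filter.Tendsto (fun t : ℕ => B * (1 - c ^ S t)) Filter.atTop (nhds 0) := by
    have hcS : Filter.Tendsto (fun t : ℕ => c ^ S t) Filter.atTop (nhds 1) := by
      have := (Real.continuousAt_const_rpow (b := (0:ℝ)) hc.ne').tendsto.comp hS0
      simpa [Real.rpow_zero, Function.comp_def] using this
    have := (hcS.const_sub 1).const_mul B
    simpa using this
  -- squeeze
  apply tendsto_of_tendsto_of_tendsto_of_le_of_le' tendsto_const_nhds hg
  · filter_upwards with t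
    exact Real.iSup_nonneg fun l => abs_nonneg _
  · have hev : ∀ᶠ t : ℕ in Filter.atTop, ∀ m : Fin M, (tm m : ℝ) < (t : ℝ) := by
      rw [Filter.eventually_all]
      intro m
      filter_upwards [Filter.eventually_gt_atTop (tm m)] with t ht
      exact_mod_cast ht
    filter_upwards [hev] with t ht
    apply ciSup_le
    intro l
    have hSnn : 0 ≤ S t :=
      Finset.sum_nonneg fun m _ => div_nonneg hβ.le (sub_nonneg.2 (ht m).le)
    set P : ℝ := ∏ m : Fin M, π m l ^ (β / ((t : ℝ) - (tm m : ℝ))) with hP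
    have hexp_nn : ∀ m : Fin M, 0 ≤ β / ((t : ℝ) - (tm m : ℝ)) := fun m =>
      div_nonneg hβ.le (sub_nonneg.2 (ht m).le)
    have hPle1 : P ≤ 1 := by
      apply Finset.prod_le_one
      · intro m _
        exact Real.rpow_nonneg (le_trans hc.le (hπ_lb m l)) _
      · intro m _
        exact Real.rpow_le_one (le_trans hc.le (hπ_lb m l)) (hπ_ub m l) (hexp_nn m)
    have hcSP : c ^ S t ≤ P := by
      rw [hS, Real.rpow_sum_of_pos hc]
      apply Finset.prod_le_prod
      · intro m _; exact Real.rpow_nonneg hc.le _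
      · intro m _
        exact Real.rpow_le_rpow hc.le (hπ_lb m l) (hexp_nn m)
    have key : |αdyna l t - α l t| = |α l t| * (1 - P) := by
      rw [hdyna, ← hP]
      have : α l t * P - α l t = α l t * (P - 1) := by ring
      rw [this, abs_mul, abs_sub_comm, abs_of_nonneg (sub_nonneg.2 hPle1)]
    rw [key]
    exact mul_le_mul (hα l t) (by linarith) (by linarith) hB
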